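/- arXiv:quant-ph/0503221 — 6 statements merged into one kernel-verified Lean document; each statement's English description precedes it below -/
import Mathlib

section
/- Let δ < √(2−√2) and let N be a δ-net of the unit sphere of ℂ^D (in the Euclidean norm). Let A be a Hermitian D×D matrix. Then max over y in N of |⟨y|A|y⟩| ≥ (1 − 2δ² + δ⁴/2) · ‖A‖_op, where ‖A‖_op is the operator norm of A. -/
open scoped ComplexOrder
set_option maxHeartbeats 1000000 in

theorem stmt_0 (D : ℕ) (hD : 0 < D) (δ : ℝ) (hδ : δ < Real.sqrt (2 - Real.sqrt 2))
    (N : Set (EuclideanSpace ℂ (Fin D)))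
    (hNsub : N ⊆ Metric.sphere (0 : EuclideanSpace ℂ (Fin D)) 1)
    (hNnet : ∀ x ∈ Metric.sphere (0 : EuclideanSpace ℂ (Fin D)) 1, ∃ y ∈ N, dist x y ≤ δ)
    (A : Matrix (Fin D) (Fin D) ℂ) (hA : A.IsHermitian) :
    ∃ y ∈ N,
      (1 - 2 * δ ^ 2 + δ ^ 4 / 2) * ‖Matrix.toEuclideanCLM (𝕜 := ℂ) A‖ ≤
        ‖inner ℂ y ((Matrix.toEuclideanCLM (𝕜 := ℂ) A) y)‖ := by
  haveI : Nonempty (Fin D) := ⟨⟨0, hD⟩⟩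
  set T : EuclideanSpace ℂ (Fin D) →L[ℂ] EuclideanSpace ℂ (Fin D) :=
    Matrix.toEuclideanCLM (𝕜 := ℂ) A with hTdef
  -- δ is nonnegative
  have hsphere : (EuclideanSpace.single (⟨0, hD⟩ : Fin D) (1 : ℂ)) ∈
      Metric.sphere (0 : EuclideanSpace ℂ (Fin D)) 1 := by
    simp [mem_sphere_iff_norm, EuclideanSpace.norm_single]
  have hδ0 : 0 ≤ δ := by
    obtain ⟨y₀, _, hy₀d⟩ := hNnet _ hsphere
    exact le_trans dist_nonneg hy₀d
  have hsqrt2 : Real.sqrt 2 ≤ 2 := by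
    nlinarith [Real.sq_sqrt (by norm_num : (0:ℝ) ≤ 2), Real.sqrt_nonneg 2]
  have h2s : (0:ℝ) ≤ 2 - Real.sqrt 2 := by linarith
  have hδ2 : δ ^ 2 ≤ 2 := by
    nlinarith [Real.sq_sqrt h2s, mul_self_lt_mul_self hδ0 hδ, Real.sqrt_nonneg 2]
  -- T is self-adjoint
  have hsa : IsSelfAdjoint T := by
    rw [IsSelfAdjoint, hTdef, ← map_star, Matrix.star_eq_conjTranspose, hA.eq]
  have hsymm := ContinuousLinearMap.isSelfAdjoint_iff_isSymmetric.mp hsa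
  -- find an element z of the spectrum with |z| = ‖T‖
  haveI : Nontrivial (EuclideanSpace ℂ (Fin D) →L[ℂ] EuclideanSpace ℂ (Fin D)) := by
    refine ⟨1, 0, fun h => ?_⟩
    obtain ⟨v, hv⟩ := exists_ne (0 : EuclideanSpace ℂ (Fin D))
    exact hv (by simpa using DFunLike.congr_fun h v)
  obtain ⟨z, hz, hznorm⟩ := spectrum.exists_nnnorm_eq_spectralRadius T
  have hzT : ‖z‖ = ‖T‖ := by
    rw [hsa.spectralRadius_eq_nnnorm] at hznorm
    exact_mod_cast congrArg ENNReal.toReal hznorm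
  -- extract an eigenvector
  have hnu : ¬ IsUnit (algebraMap ℂ (EuclideanSpace ℂ (Fin D) →L[ℂ] EuclideanSpace ℂ (Fin D)) z - T) :=
    spectrum.mem_iff.mp hz
  have hni : ¬ Function.Injective
      ⇑(algebraMap ℂ (EuclideanSpace ℂ (Fin D) →L[ℂ] EuclideanSpace ℂ (Fin D)) z - T) := by
    intro hinj
    exact hnu (ContinuousLinearMap.isUnit_iff_bijective.mpr
      ⟨hinj, LinearMap.injective_iff_surjective.mp hinj⟩)
  obtain ⟨a, b, hab, hne⟩ := Function.not_injective_iff.mp hni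
  have hv0 : a - b ≠ 0 := sub_ne_zero.mpr hne
  have hveig : T (a - b) = z • (a - b) := by
    have h0 : (algebraMap ℂ _ z - T) (a - b) = 0 := by
      rw [map_sub (algebraMap ℂ _ z - T), hab, sub_self]
    have h1 : z • (a - b) - T (a - b) = 0 := by
      simpa [ContinuousLinearMap.sub_apply, Algebra.algebraMap_eq_smul_one] using h0
    rw [sub_eq_zero] at h1
    exact h1.symm
  -- normalize the eigenvector
  set x : EuclideanSpace ℂ (Fin D) := ((‖a - b‖⁻¹ : ℝ) : ℂ) • (a - b) with hxdef
  have hxnorm : ‖x‖ = 1 := by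
    rw [hxdef, norm_smul]
    simp [norm_ne_zero_iff.mpr hv0, inv_mul_cancel₀ (norm_ne_zero_iff.mpr hv0)]
  have hTx : T x = z • x := by
    rw [hxdef, map_smul, hveig, smul_comm]
  -- pick y in the net close to x
  have hx_sph : x ∈ Metric.sphere (0 : EuclideanSpace ℂ (Fin D)) 1 :=
    mem_sphere_zero_iff_norm.mpr hxnorm
  obtain ⟨y, hyN, hyd⟩ := hNnet x hx_sph
  refine ⟨y, hyN, ?_⟩
  have hy1 : ‖y‖ = 1 := mem_sphere_zero_iff_norm.mp (hNsub hyN)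
  -- decompose y
  set c : ℂ := inner ℂ x y with hcdef
  set w : EuclideanSpace ℂ (Fin D) := y - c • x with hwdef
  have hxx : (inner ℂ x x : ℂ) = 1 := by
    rw [inner_self_eq_norm_sq_to_K, hxnorm]; norm_num
  have hxw : (inner ℂ x w : ℂ) = 0 := by
    rw [hwdef, inner_sub_right, inner_smul_right, hxx, mul_one, ← hcdef, sub_self]
  have hwx : (inner ℂ w x : ℂ) = 0 := by
    rw [← inner_conj_symm, hxw, map_zero]
  have hxTw : (inner ℂ x (T w) : ℂ) = 0 := by
    have h := hsymm x w
    simp only [ContinuousLinearMap.coe_coe] at h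
    rw [← h, hTx, inner_smul_left, hxw, mul_zero]
  have hy_eq : y = c • x + w := by rw [hwdef]; abel
  have hTy : T y = (c * z) • x + T w := by
    rw [hy_eq, map_add, map_smul, hTx, smul_smul]
  have hip : (inner ℂ y (T y) : ℂ) = (starRingEnd ℂ) c * c * z + inner ℂ w (T w) := by
    rw [hTy]
    nth_rewrite 1 [hy_eq]
    simp only [inner_add_left, inner_add_right, inner_smul_left, inner_smul_right,
      hxx, hxTw, hwx, mul_zero, mul_one, add_zero, zero_add]
    ring
  -- Pythagoras
  have hPyth : ‖c‖ ^ 2 + ‖w‖ ^ 2 = 1 := by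
    have h := norm_add_sq (𝕜 := ℂ) (c • x) w
    rw [← hy_eq, hy1, inner_smul_left, hxw, mul_zero, norm_smul, hxnorm] at h
    simp only [map_zero, mul_one] at h
    nlinarith [h]
  -- closeness gives a lower bound on re c
  have hre : 1 - δ ^ 2 / 2 ≤ c.re := by
    have hd : ‖x - y‖ ≤ δ := by rw [← dist_eq_norm]; exact hyd
    have hsq : ‖x - y‖ ^ 2 ≤ δ ^ 2 := by nlinarith [norm_nonneg (x - y)]
    have h := norm_sub_sq (𝕜 := ℂ) x y
    rw [hxnorm, hy1, ← hcdef] at h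
    simp only [RCLike.re_to_complex, one_pow, mul_one] at h
    nlinarith [h]
  have hcre_le : c.re ≤ ‖c‖ := by
    have := Complex.re_le_norm c
    exact this
  -- Cauchy–Schwarz bound on the remainder
  have hCS : ‖(inner ℂ w (T w) : ℂ)‖ ≤ ‖T‖ * ‖w‖ ^ 2 := by
    calc ‖(inner ℂ w (T w) : ℂ)‖ ≤ ‖w‖ * ‖T w‖ := norm_inner_le_norm _ _
      _ ≤ ‖w‖ * (‖T‖ * ‖w‖) := by
          gcongr
          exact T.le_opNorm w
      _ = ‖T‖ * ‖w‖ ^ 2 := by ring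
  -- lower bound on the Rayleigh quotient at y
  have h1 : ‖(starRingEnd ℂ) c * c * z‖ = ‖c‖ ^ 2 * ‖T‖ := by
    rw [norm_mul, norm_mul, RCLike.norm_conj, hzT]; ring
  have h2 : ‖(starRingEnd ℂ) c * c * z‖ ≤
      ‖(starRingEnd ℂ) c * c * z + (inner ℂ w (T w) : ℂ)‖ + ‖(inner ℂ w (T w) : ℂ)‖ := by
    simpa using norm_sub_le ((starRingEnd ℂ) c * c * z + (inner ℂ w (T w) : ℂ)) (inner ℂ w (T w))
  have hlow : ‖c‖ ^ 2 * ‖T‖ - ‖T‖ * ‖w‖ ^ 2 ≤ ‖(inner ℂ y (T y) : ℂ)‖ := by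
    rw [hip]
    linarith [h1 ▸ h2, hCS]
  -- conclude
  have hts : 1 - δ ^ 2 / 2 ≤ ‖c‖ := le_trans hre hcre_le
  have hs0 : (0:ℝ) ≤ 1 - δ ^ 2 / 2 := by linarith
  have hn0 : (0:ℝ) ≤ ‖T‖ := norm_nonneg T
  nlinarith [hlow, hPyth, mul_nonneg hn0 (mul_nonneg (sub_nonneg.mpr hts)
    (by linarith : (0:ℝ) ≤ ‖c‖ + (1 - δ ^ 2 / 2)))]
end

section
/- Let K = conv{x₁ ⊗ ... ⊗ x_m : each x_k in the unit ball of ℂ^D} ⊂ (ℂ^D)^{⊗m} be the projective tensor product of m copies of the D-dimensional complex Euclidean unit ball. Then K contains the Euclidean ball of radius D^{-(m-1)/2} in (ℂ^D)^{⊗m} ≅ ℂ^{D^m}. Equivalently, for every tensor A ∈ (ℂ^D)^{⊗m}, the injective norm sup{|⟨A, x¹⊗...⊗x^m⟩| : x^k unit vectors} is at least D^{-(m-1)/2} times the Euclidean (Hilbert–Schmidt) norm of A. -/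
/-- The projective tensor product of `m` copies of the unit ball of `ℂ^D`
contains the Euclidean ball of radius `D^{-(m-1)/2}`; equivalently (dually), for every
tensor `A` the injective norm is at least `D^{-(m-1)/2}` times the Euclidean norm of `A`,
and moreover the supremum defining the injective norm is attained on some tuple of unit
vectors witnessing this bound. -/
theorem stmt_4 (D m : ℕ) (hD : 0 < D) (hm : 1 ≤ m)
    (A : EuclideanSpace ℂ (Fin m → Fin D)) :
    ∃ x : Fin m → EuclideanSpace ℂ (Fin D), (∀ k, ‖x k‖ = 1) ∧
      (D : ℝ) ^ (-(((m : ℝ) - 1) / 2)) * ‖A‖ ≤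
        ‖∑ i : Fin m → Fin D, A i * ∏ k, x k (i k)‖ := by
  haveI : Nonempty (Fin D) := ⟨⟨0, hD⟩⟩
  by_cases hA : ‖A‖ = 0
  · refine ⟨fun _ => EuclideanSpace.single ⟨0, hD⟩ 1, fun k => ?_, ?_⟩
    · simp [EuclideanSpace.norm_single]
    · rw [hA, mul_zero]
      exact norm_nonneg _
  set k₀ : Fin m := ⟨0, hm⟩ with hk₀
  set e := Equiv.funSplitAt k₀ (Fin D) with he
  set T : ({ j // j ≠ k₀ } → Fin D) → ℝ :=
    fun g => ∑ j : Fin D, ‖A (e.symm (j, g))‖ ^ 2 with hTdef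
  obtain ⟨g₀, hg₀⟩ : ∃ g₀, ∀ g, T g ≤ T g₀ := Finite.exists_max T
  have hAsq : ‖A‖ ^ 2 = ∑ i, ‖A i‖ ^ 2 := by
    rw [EuclideanSpace.norm_eq, Real.sq_sqrt]
    exact Finset.sum_nonneg fun i _ => sq_nonneg _
  have hsum : ∑ g, T g = ‖A‖ ^ 2 := by
    rw [hAsq, ← e.symm.sum_comp (fun i => ‖A i‖ ^ 2), Fintype.sum_prod_type,
      Finset.sum_comm]
  have hcard : Fintype.card ({ j // j ≠ k₀ } → Fin D) = D ^ (m - 1) := by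
    rw [Fintype.card_fun, Fintype.card_fin]
    congr 1
    have : Fintype.card { j : Fin m // j ≠ k₀ } = Fintype.card (Fin m) - 1 := by
      rw [Fintype.card_subtype_compl, Fintype.card_subtype_eq]
    rw [this, Fintype.card_fin]
  have hP : (0 : ℝ) < (D : ℝ) ^ (m - 1) := by positivity
  have hbound : ‖A‖ ^ 2 ≤ (D : ℝ) ^ (m - 1) * T g₀ := by
    calc ‖A‖ ^ 2 = ∑ g, T g := hsum.symm
      _ ≤ Fintype.card ({ j // j ≠ k₀ } → Fin D) • T g₀ :=
        Finset.sum_le_card_nsmul _ _ _ (fun g _ => hg₀ g)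
      _ = (D : ℝ) ^ (m - 1) * T g₀ := by
        rw [hcard, nsmul_eq_mul]; push_cast; ring
  have hApos : 0 < ‖A‖ := lt_of_le_of_ne (norm_nonneg _) (Ne.symm hA)
  have hTpos : 0 < T g₀ := by
    by_contra h
    push_neg at h
    have : ‖A‖ ^ 2 ≤ 0 := hbound.trans (by nlinarith)
    nlinarith
  set s : ℝ := Real.sqrt (T g₀) with hs
  have hspos : 0 < s := Real.sqrt_pos.mpr hTpos
  set y : EuclideanSpace ℂ (Fin D) :=
    WithLp.toLp 2 (fun j => (starRingEnd ℂ) (A (e.symm (j, g₀))) / (s : ℂ)) with hy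
  set x : Fin m → EuclideanSpace ℂ (Fin D) :=
    fun k => if h : k = k₀ then y else EuclideanSpace.single (g₀ ⟨k, h⟩) 1 with hx
  have hynorm : ‖y‖ = 1 := by
    rw [EuclideanSpace.norm_eq]
    have : ∀ j : Fin D, ‖y j‖ ^ 2 = ‖A (e.symm (j, g₀))‖ ^ 2 / T g₀ := by
      intro j
      rw [hy]
      simp only [PiLp.toLp_apply]
      rw [norm_div, RCLike.norm_conj, Complex.norm_real, Real.norm_eq_abs,
        abs_of_pos hspos, div_pow, hs, Real.sq_sqrt hTpos.le]
    rw [Finset.sum_congr rfl (fun j _ => this j), ← Finset.sum_div,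
      div_self hTpos.ne', Real.sqrt_one]
  refine ⟨x, ?_, ?_⟩
  · intro k
    rw [hx]
    by_cases h : k = k₀
    · simp [h, hynorm]
    · simp [h, EuclideanSpace.norm_single]
  -- compute the pairing
  have hsymm_at : ∀ (j : Fin D) (g : { j // j ≠ k₀ } → Fin D) (k : Fin m) (h : k ≠ k₀),
      e.symm (j, g) k = g ⟨k, h⟩ := by
    intro j g k h
    simp [he, Equiv.funSplitAt, Equiv.piSplitAt, h]
  have hsymm_k₀ : ∀ (j : Fin D) (g : { j // j ≠ k₀ } → Fin D),
      e.symm (j, g) k₀ = j := by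
    intro j g
    simp [he, Equiv.funSplitAt, Equiv.piSplitAt]
  have key : (∑ i : Fin m → Fin D, A i * ∏ k, x k (i k)) = (s : ℂ) := by
    rw [← e.symm.sum_comp (fun i => A i * ∏ k, x k (i k)), Fintype.sum_prod_type]
    have inner : ∀ j : Fin D,
        (∑ g : { j // j ≠ k₀ } → Fin D, A (e.symm (j, g)) * ∏ k, x k (e.symm (j, g) k))
          = A (e.symm (j, g₀)) * y j := by
      intro j
      rw [Finset.sum_eq_single g₀]
      · congr 1
        refine Fintype.prod_eq_single k₀ ?_ |>.trans ?_
        · intro k hk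
          rw [hx]
          simp only [hk, dif_neg]
          rw [hsymm_at j g₀ k hk]
          simp [EuclideanSpace.single_apply]
        · rw [hx]
          rw [hsymm_k₀ j g₀]
          simp
      · intro g _ hg
        have : ∃ k' : { j // j ≠ k₀ }, g k' ≠ g₀ k' := by
          by_contra hcon
          push_neg at hcon
          exact hg (funext hcon)
        obtain ⟨k', hk'⟩ := this
        have hzero : x k'.1 (e.symm (j, g) k'.1) = 0 := by
          rw [hx]
          simp only [dif_neg k'.2]
          rw [hsymm_at j g k'.1 k'.2]
          rw [EuclideanSpace.single_apply]
          simp only [Subtype.coe_eta]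
          rw [if_neg hk']
        rw [Finset.prod_eq_zero (Finset.mem_univ k'.1) hzero, mul_zero]
      · intro h
        exact absurd (Finset.mem_univ g₀) h
    rw [Finset.sum_congr rfl (fun j _ => inner j)]
    have term : ∀ j : Fin D, A (e.symm (j, g₀)) * y j
        = ((‖A (e.symm (j, g₀))‖ ^ 2 / s : ℝ) : ℂ) := by
      intro j
      rw [hy]
      simp only [PiLp.toLp_apply]
      rw [mul_div_assoc', Complex.mul_conj, Complex.normSq_eq_norm_sq]
      push_cast
      ring
    rw [Finset.sum_congr rfl (fun j _ => term j), ← Complex.ofReal_sum]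
    congr 1
    rw [← Finset.sum_div]
    have hTg : (∑ i : Fin D, ‖A (e.symm (i, g₀))‖ ^ 2) = T g₀ := rfl
    rw [hTg, div_eq_iff hspos.ne']
    rw [hs, Real.mul_self_sqrt hTpos.le]
  rw [key]
  rw [Complex.norm_real, Real.norm_eq_abs, abs_of_pos hspos]
  -- final numeric inequality
  rw [hs, Real.le_sqrt (by positivity) hTpos.le]
  have hc2 : ((D : ℝ) ^ (-(((m : ℝ) - 1) / 2))) ^ 2 = ((D : ℝ) ^ (m - 1))⁻¹ := by
      rw [← Real.rpow_natCast ((D : ℝ) ^ (-(((m : ℝ) - 1) / 2))) 2,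
        ← Real.rpow_mul (by positivity)]
      have h1 : (-(((m : ℝ) - 1) / 2)) * (2 : ℕ) = -((m : ℝ) - 1) := by push_cast; ring
      rw [h1, Real.rpow_neg (by positivity)]
      congr 1
      have h2 : ((m : ℝ) - 1) = ((m - 1 : ℕ) : ℝ) := by
        rw [Nat.cast_sub hm]; push_cast; ring
      rw [h2, Real.rpow_natCast]
  rw [mul_pow, hc2, inv_mul_le_iff₀ hP]
  exact hbound
end

section
/- Let u be a unit vector in ℝ^n, H₀ = u^⊥, h > 0, H = H₀ + hu, and let W ⊂ H be a convex body with Ω = conv(W ∪ −W). If the unit ball B₂^n is the Löwner (minimal-volume circumscribed) ellipsoid of Ω, then h = 1/√n and B₂^n ∩ H is the Löwner ellipsoid of W within H. -/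
open MeasureTheory Pointwise

/-- An ellipsoid in `ℝ^k`: an affine image of the closed Euclidean unit ball under an
invertible linear map (plus a translation). -/
def IsEllipsoid {k : ℕ} (E : Set (EuclideanSpace ℝ (Fin k))) : Prop :=
  ∃ (L : EuclideanSpace ℝ (Fin k) ≃ₗ[ℝ] EuclideanSpace ℝ (Fin k))
    (c : EuclideanSpace ℝ (Fin k)),
    E = (fun x => c + L x) '' Metric.closedBall (0 : EuclideanSpace ℝ (Fin k)) 1

/-- `E` is the Löwner (minimal-volume circumscribed) ellipsoid of `K`. -/
def IsLoewner {k : ℕ} (K E : Set (EuclideanSpace ℝ (Fin k))) : Prop :=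
  IsEllipsoid E ∧ K ⊆ E ∧
    ∀ E', IsEllipsoid E' → K ⊆ E' → volume E ≤ volume E'

open RealInnerProductSpace Module

section Aux

lemma stmt7_det_aux {n : ℕ} (A : Matrix (Fin (n+1)) (Fin (n+1)) ℝ)
    (h0 : ∀ j, j ≠ 0 → A 0 j = 0) :
    A.det = A 0 0 * (A.submatrix Fin.succ Fin.succ).det := by
  rw [Matrix.det_succ_row_zero, Fin.sum_univ_succ]
  simp [h0, Fin.succAbove_zero, Fin.succ_ne_zero]

lemma stmt7_amgm_aux {n : ℕ} (hn : 1 ≤ n) {x : ℝ} (hx0 : 0 < x) (hx1 : x ≤ 1)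
    (hne : ((n:ℝ)+1) * x ≠ 1) :
    ((n:ℝ)+1)*x * (((n:ℝ)+1)*(1-x)/n)^n < 1 := by
  have hn0 : (0:ℝ) < n := by exact_mod_cast hn
  set s : ℝ := ((n:ℝ)+1)*x - 1 with hs
  have hs1 : ((n:ℝ)+1)*x = 1 + s := by ring
  have hsne : s ≠ 0 := by
    intro h0; apply hne; rw [hs1, h0, add_zero]
  have hsgt : -1 < s := by
    have : 0 < ((n:ℝ)+1)*x := by positivity
    simp only [hs]; linarith
  have hsle : s ≤ n := by
    have : ((n:ℝ)+1)*x ≤ (n:ℝ)+1 := by nlinarith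
    simp only [hs]; linarith
  have key2 : ((n:ℝ)+1)*(1-x)/n = 1 - s/n := by
    field_simp
    ring
  rw [hs1, key2]
  have h1 : 1 + s < Real.exp s := by
    have := Real.add_one_lt_exp hsne; linarith
  have h2 : (1 - s/n)^n ≤ Real.exp (-s) := by
    have hb : 1 - s/n ≤ Real.exp (-(s/n)) := by
      have := Real.add_one_le_exp (-(s/n)); linarith
    have hnn : (0:ℝ) ≤ 1 - s/n := by
      rw [sub_nonneg, div_le_one hn0]; exact hsle
    calc (1 - s/n)^n ≤ (Real.exp (-(s/n)))^n := pow_le_pow_left₀ hnn hb n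
      _ = Real.exp (-s) := by
          rw [← Real.exp_nat_mul]; congr 1; field_simp
  have hpos : (0:ℝ) < 1 + s := by linarith
  calc (1+s) * (1 - s/n)^n ≤ (1+s) * Real.exp (-s) := by
        apply mul_le_mul_of_nonneg_left h2 hpos.le
    _ < Real.exp s * Real.exp (-s) := by
        apply mul_lt_mul_of_pos_right h1 (Real.exp_pos _)
    _ = 1 := by rw [← Real.exp_add]; simp

lemma stmt7_onb_aux {n : ℕ} (u : EuclideanSpace ℝ (Fin (n+1))) (hu : ‖u‖ = 1)
    (F : EuclideanSpace ℝ (Fin n) →ₗᵢ[ℝ] EuclideanSpace ℝ (Fin (n+1)))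
    (hFu : ∀ z, ⟪u, F z⟫ = 0)
    (c : OrthonormalBasis (Fin n) ℝ (EuclideanSpace ℝ (Fin n))) :
    ∃ b : OrthonormalBasis (Fin (n+1)) ℝ (EuclideanSpace ℝ (Fin (n+1))),
      b 0 = u ∧ ∀ j : Fin n, b j.succ = F (c j) := by
  set v : Fin (n+1) → EuclideanSpace ℝ (Fin (n+1)) := Fin.cons u (fun j => F (c j)) with hv
  have hon : Orthonormal ℝ v := by
    rw [orthonormal_iff_ite]
    intro i j
    refine Fin.cases ?_ ?_ i <;> [skip; intro i'] <;> refine Fin.cases ?_ ?_ j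
    · simp only [hv, Fin.cons_zero, if_pos rfl]
      rw [real_inner_self_eq_norm_sq, hu]; norm_num
    · intro j'
      simp only [hv, Fin.cons_zero, Fin.cons_succ]
      rw [if_neg (Fin.succ_ne_zero j').symm]
      exact hFu (c j')
    · simp only [hv, Fin.cons_zero, Fin.cons_succ]
      rw [if_neg (Fin.succ_ne_zero i'), real_inner_comm]
      exact hFu (c i')
    · intro j'
      simp only [hv, Fin.cons_succ]
      rw [F.inner_map_map]
      have h2 := orthonormal_iff_ite.1 c.orthonormal i' j'
      rw [h2]; simp [Fin.succ_inj]
  have hsp : ⊤ ≤ Submodule.span ℝ (Set.range v) := by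
    rw [hon.linearIndependent.span_eq_top_of_card_eq_finrank]
    simp [finrank_euclideanSpace]
  exact ⟨OrthonormalBasis.mk hon hsp, by simp [hv], fun j => by simp [hv]⟩

lemma stmt7_det_block {n : ℕ} {u : EuclideanSpace ℝ (Fin (n+1))}
    {F : EuclideanSpace ℝ (Fin n) →ₗᵢ[ℝ] EuclideanSpace ℝ (Fin (n+1))}
    {c : OrthonormalBasis (Fin n) ℝ (EuclideanSpace ℝ (Fin n))}
    {b : OrthonormalBasis (Fin (n+1)) ℝ (EuclideanSpace ℝ (Fin (n+1)))}
    (hb0 : b 0 = u) (hbs : ∀ j : Fin n, b j.succ = F (c j))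
    (T : EuclideanSpace ℝ (Fin (n+1)) →ₗ[ℝ] EuclideanSpace ℝ (Fin (n+1)))
    (hrow : ∀ j : Fin n, ⟪u, T (F (c j))⟫ = 0) :
    LinearMap.det T
      = ⟪u, T u⟫ * Matrix.det (Matrix.of fun i j : Fin n => ⟪F (c i), T (F (c j))⟫) := by
  rw [← LinearMap.det_toMatrix b.toBasis]
  have hA : ∀ i j, LinearMap.toMatrix b.toBasis b.toBasis T i j = ⟪b i, T (b j)⟫ := by
    intro i j
    rw [LinearMap.toMatrix_apply, b.coe_toBasis, b.coe_toBasis_repr_apply,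
      b.repr_apply_apply]
  rw [stmt7_det_aux _ (fun j hj => ?_)]
  · congr 1
    · rw [hA, hb0]
    · congr 1
      ext i j
      simp only [Matrix.submatrix_apply, Matrix.of_apply, hA, hbs]
  · rcases Fin.eq_zero_or_eq_succ j with rfl | ⟨j', rfl⟩
    · exact absurd rfl hj
    · rw [hA, hb0, hbs]; exact hrow j'

lemma stmt7_key_lemma (n : ℕ) (h : ℝ) (hh : 0 < h)
    (u : EuclideanSpace ℝ (Fin (n + 1))) (hu : ‖u‖ = 1)
    (f : EuclideanSpace ℝ (Fin n) →ᵃⁱ[ℝ] EuclideanSpace ℝ (Fin (n + 1)))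
    (hFu : ∀ z, ⟪u, f.linearIsometry z⟫ = 0)
    (W' : Set (EuclideanSpace ℝ (Fin n)))
    (hLoew : IsLoewner (convexHull ℝ ((f '' W') ∪ -(f '' W')))
      (Metric.closedBall (0 : EuclideanSpace ℝ (Fin (n + 1))) 1))
    (α : ℝ) (hα : 0 < α) (v₀ : EuclideanSpace ℝ (Fin (n+1))) (hv₀ : ⟪u, v₀⟫ = 0)
    (L' : EuclideanSpace ℝ (Fin n) →ₗ[ℝ] EuclideanSpace ℝ (Fin n))
    (hdet : LinearMap.det L' ≠ 0)
    (hcont : ∀ x ∈ W', ∃ z, ‖z‖^2 ≤ 1 - h^2/α^2 ∧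
      f x = (h • u + v₀) + f.linearIsometry (L' z)) :
    1 ≤ α * |LinearMap.det L'| := by
  classical
  set F := f.linearIsometry with hFdef
  set B := Metric.closedBall (0 : EuclideanSpace ℝ (Fin (n+1))) 1 with hBdef
  set c : OrthonormalBasis (Fin n) ℝ (EuclideanSpace ℝ (Fin n)) :=
    EuclideanSpace.basisFun (Fin n) ℝ with hcdef
  obtain ⟨b, hb0, hbs⟩ := stmt7_onb_aux u hu F hFu c
  set g : EuclideanSpace ℝ (Fin (n+1)) →ₗ[ℝ] EuclideanSpace ℝ (Fin n) :=
    ∑ j, LinearMap.smulRight ((innerSL ℝ (F (c j))).toLinearMap) (c j) with hgdef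
  have hgapp : ∀ x, g x = ∑ j, ⟪F (c j), x⟫ • c j := by
    intro x
    simp [hgdef, LinearMap.sum_apply, LinearMap.smulRight_apply]
  have hg1 : ∀ z, g (F z) = z := by
    intro z
    rw [hgapp]
    have : ∀ j, ⟪F (c j), F z⟫ = ⟪c j, z⟫ := fun j => F.inner_map_map _ _
    simp_rw [this]
    exact c.sum_repr' z
  have hg2 : g u = 0 := by
    rw [hgapp]
    have : ∀ j, ⟪F (c j), u⟫ = 0 := fun j => by rw [real_inner_comm]; exact hFu _
    simp [this]
  set T : EuclideanSpace ℝ (Fin (n+1)) →ₗ[ℝ] EuclideanSpace ℝ (Fin (n+1)) :=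
    LinearMap.smulRight ((innerSL ℝ u).toLinearMap) (α • u + (α/h) • v₀)
      + F.toLinearMap ∘ₗ L' ∘ₗ g with hTdef
  have hTapp : ∀ (t : ℝ) (z : EuclideanSpace ℝ (Fin n)),
      T (t • u + F z) = (t*α) • u + (t*(α/h)) • v₀ + F (L' z) := by
    intro t z
    have hinner : ⟪u, t • u + F z⟫ = t := by
      rw [inner_add_right, real_inner_smul_right, hFu,
        real_inner_self_eq_norm_sq, hu]
      ring
    have hgval : g (t • u + F z) = z := by
      rw [map_add, LinearMap.map_smul, hg2, hg1, smul_zero, zero_add]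
    simp only [hTdef, LinearMap.add_apply, LinearMap.smulRight_apply,
      ContinuousLinearMap.coe_coe, innerSL_apply_apply, LinearMap.comp_apply]
    rw [hinner, hgval, smul_add, smul_smul, smul_smul]
    rfl
  have hTu : T u = α • u + (α/h) • v₀ := by
    have := hTapp 1 0
    simpa using this
  have hTF : ∀ j, T (F (c j)) = F (L' (c j)) := by
    intro j
    have := hTapp 0 (c j)
    simpa using this
  have hdetT : LinearMap.det T = α * LinearMap.det L' := by
    rw [stmt7_det_block hb0 hbs T (fun j => by rw [hTF]; exact hFu _)]
    congr 1
    · rw [hTu, inner_add_right, real_inner_smul_right, real_inner_smul_right,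
        real_inner_self_eq_norm_sq, hu, hv₀]
      ring
    · rw [← LinearMap.det_toMatrix c.toBasis]
      congr 1
      ext i j
      rw [Matrix.of_apply, hTF, F.inner_map_map, LinearMap.toMatrix_apply,
        c.coe_toBasis, c.coe_toBasis_repr_apply, c.repr_apply_apply]
  have hmemB : ∀ z : EuclideanSpace ℝ (Fin n), ‖z‖^2 ≤ 1 - h^2/α^2 →
      (h/α) • u + F z ∈ B := by
    intro z hz
    rw [hBdef, Metric.mem_closedBall, dist_zero_right]
    have hn : ‖(h/α) • u + F z‖^2 = (h/α)^2 + ‖z‖^2 := by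
      rw [norm_add_sq_real]
      have h2 : ⟪(h/α) • u, F z⟫ = 0 := by
        rw [real_inner_smul_left, hFu]; ring
      rw [h2, norm_smul, F.norm_map, hu, Real.norm_eq_abs,
        abs_of_pos (div_pos hh hα)]
      ring
    have he : (h/α)^2 = h^2/α^2 := by rw [div_pow]
    nlinarith [norm_nonneg ((h/α) • u + F z)]
  have himgT : ∀ z : EuclideanSpace ℝ (Fin n), T ((h/α) • u + F z)
      = h • u + v₀ + F (L' z) := by
    intro z
    rw [hTapp]
    rw [div_mul_cancel₀ h hα.ne']
    have : h/α*(α/h) = 1 := by field_simp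
    rw [this, one_smul]
  have hconv : convexHull ℝ ((f '' W') ∪ -(f '' W')) ⊆ T '' B := by
    apply convexHull_min
    · apply Set.union_subset
      · rintro _ ⟨x, hx, rfl⟩
        obtain ⟨z, hz, hfx⟩ := hcont x hx
        exact ⟨(h/α) • u + F z, hmemB z hz, by rw [himgT, ← hfx]⟩
      · intro x hx
        rw [Set.mem_neg] at hx
        obtain ⟨y, hy, hyx⟩ := hx
        obtain ⟨z, hz, hfx⟩ := hcont y hy
        refine ⟨-((h/α) • u + F z), ?_, ?_⟩
        · have := hmemB z hz
          rw [hBdef, Metric.mem_closedBall, dist_zero_right] at this ⊢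
          rwa [norm_neg]
        · rw [map_neg, himgT, ← hfx, hyx, neg_neg]
    · exact (convex_closedBall _ _).linear_image T
  have hunit : IsUnit (LinearMap.toMatrix b.toBasis b.toBasis T).det := by
    rw [LinearMap.det_toMatrix, hdetT]
    exact isUnit_iff_ne_zero.2 (mul_ne_zero hα.ne' hdet)
  have hell : IsEllipsoid (T '' B) := by
    refine ⟨LinearEquiv.ofIsUnitDet hunit, 0, ?_⟩
    have hcoe : ∀ x, (LinearEquiv.ofIsUnitDet hunit) x = T x := fun x =>
      DFunLike.congr_fun (LinearEquiv.coe_ofIsUnitDet hunit) x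
    apply Set.image_congr
    intro x _
    rw [hcoe, zero_add]
  have hvol := hLoew.2.2 (T '' B) hell hconv
  rw [Measure.addHaar_image_linearMap volume T B] at hvol
  have h0 : volume B ≠ 0 := by
    rw [hBdef]; exact (Metric.measure_closedBall_pos volume _ one_pos).ne'
  have htop : volume B ≠ ⊤ := by rw [hBdef]; exact measure_closedBall_lt_top.ne
  by_contra hlt
  push_neg at hlt
  have habs : |LinearMap.det T| = α * |LinearMap.det L'| := by
    rw [hdetT, abs_mul, abs_of_pos hα]
  rw [habs] at hvol
  have hc : volume B < volume B := by
    calc volume B ≤ ENNReal.ofReal (α * |LinearMap.det L'|) * volume B := hvol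
      _ < 1 * volume B := by
          exact (mul_comm _ _).trans_lt ((ENNReal.mul_lt_mul_right h0 htop (ENNReal.ofReal_lt_one.2 hlt)).trans_eq (mul_comm _ _))
      _ = volume B := one_mul _
  exact absurd hc (lt_irrefl _)

end Aux

set_option maxHeartbeats 1000000 in
/-- If the symmetrization `Ω = conv(W ∪ −W)` of a convex body `W` sitting in the affine
hyperplane `{x : ⟪u,x⟫ = h}` (`u` a unit vector, `h > 0`) of `ℝ^{n+1}` is in Löwner
position (its Löwner ellipsoid is the unit ball), then `h = 1/√(n+1)` and the section
`B ∩ H` — i.e. the preimage of the unit ball under the isometric parametrization `f` of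
the hyperplane — is the Löwner ellipsoid of `W` within `H`. -/
theorem stmt_7 (n : ℕ) (h : ℝ) (hh : 0 < h)
    (u : EuclideanSpace ℝ (Fin (n + 1))) (hu : ‖u‖ = 1)
    (f : EuclideanSpace ℝ (Fin n) →ᵃⁱ[ℝ] EuclideanSpace ℝ (Fin (n + 1)))
    (hf : ∀ x, (inner ℝ u (f x) : ℝ) = h)
    (W' : Set (EuclideanSpace ℝ (Fin n)))
    (hWc : Convex ℝ W') (hWcp : IsCompact W') (hWne : (interior W').Nonempty)
    (hLoew : IsLoewner (convexHull ℝ ((f '' W') ∪ -(f '' W')))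
      (Metric.closedBall (0 : EuclideanSpace ℝ (Fin (n + 1))) 1)) :
    h = 1 / Real.sqrt (n + 1) ∧
      IsLoewner W' (f ⁻¹' Metric.closedBall (0 : EuclideanSpace ℝ (Fin (n + 1))) 1) := by
  classical
  set F := f.linearIsometry with hFdef
  set B := Metric.closedBall (0 : EuclideanSpace ℝ (Fin (n+1))) 1 with hBdef
  have hfF : ∀ x, f x = F x + f 0 := by
    intro x
    have := f.map_vadd 0 x
    rw [vadd_eq_add, add_zero] at this
    rw [this, vadd_eq_add]
  have hFu : ∀ z, ⟪u, F z⟫ = 0 := by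
    intro z
    have h1 : F z = f z - f 0 := by rw [hfF z]; abel
    rw [h1, inner_sub_right, hf, hf, sub_self]
  have hune : u ≠ 0 := by intro h0; rw [h0, norm_zero] at hu; norm_num at hu
  have hrange : LinearMap.range F.toLinearMap = (ℝ ∙ u)ᗮ := by
    apply Submodule.eq_of_le_of_finrank_eq
    · rintro _ ⟨z, rfl⟩
      exact Submodule.mem_orthogonal_singleton_iff_inner_right.2 (hFu z)
    · rw [LinearMap.finrank_range_of_inj F.injective]
      have h1 : finrank ℝ (ℝ ∙ u) + finrank ℝ (ℝ ∙ u)ᗮ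
          = finrank ℝ (EuclideanSpace ℝ (Fin (n+1))) :=
        Submodule.finrank_add_finrank_orthogonal _
      rw [finrank_span_singleton hune, finrank_euclideanSpace_fin] at h1
      rw [finrank_euclideanSpace_fin]
      omega
  obtain ⟨x₀, hx₀F⟩ : ∃ x₀, F x₀ = h • u - f 0 := by
    have hm : h • u - f 0 ∈ (ℝ ∙ u)ᗮ := by
      apply Submodule.mem_orthogonal_singleton_iff_inner_right.2
      rw [inner_sub_right, inner_smul_right, hf, real_inner_self_eq_norm_sq, hu]
      ring
    rw [← hrange] at hm
    exact hm
  have hx₀ : f x₀ = h • u := by rw [hfF, hx₀F]; abel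
  have hFd : ∀ x : EuclideanSpace ℝ (Fin n), f x - h • u = F (x - x₀) := by
    intro x
    rw [← hx₀, ← vsub_eq_sub (f x), ← f.map_vsub, vsub_eq_sub]
  have hpyth : ∀ x : EuclideanSpace ℝ (Fin n), ‖f x‖^2 = ‖x - x₀‖^2 + h^2 := by
    intro x
    have h1 : f x = F (x - x₀) + h • u := by rw [← hFd]; abel
    rw [h1, norm_add_sq_real]
    have h2 : ⟪F (x - x₀), h • u⟫ = 0 := by
      rw [real_inner_smul_right, real_inner_comm, hFu]; ring
    rw [h2, F.norm_map, norm_smul, hu]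
    simp [abs_of_pos hh]
    try ring
  have hWB : ∀ x ∈ W', ‖f x‖ ≤ 1 := by
    intro x hx
    have : f x ∈ B :=
      hLoew.2.1 (subset_convexHull ℝ _ (Set.mem_union_left _ ⟨x, hx, rfl⟩))
    rw [hBdef, Metric.mem_closedBall, dist_zero_right] at this
    exact this
  have hWr : ∀ x ∈ W', ‖x - x₀‖^2 ≤ 1 - h^2 := by
    intro x hx
    have h1 := hpyth x
    have h2 := hWB x hx
    nlinarith [norm_nonneg (f x)]
  have hh1 : h ≤ 1 := by
    obtain ⟨x, hx⟩ := hWne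
    have hx' := interior_subset hx
    have h1 : h = ⟪u, f x⟫ := (hf x).symm
    have h2 := real_inner_le_norm u (f x)
    rw [← h1, hu, one_mul] at h2
    exact h2.trans (hWB x hx')
  have hlt1 : 1 ≤ n → h < 1 := by
    intro hn
    rcases lt_or_eq_of_le hh1 with hl | he
    · exact hl
    · exfalso
      obtain ⟨x, hx⟩ := hWne
      have hW0 : W' ⊆ {x₀} := by
        intro y hy
        have h1 := hWr y hy
        rw [← he] at h1
        have h2 : ‖y - x₀‖^2 ≤ 0 := by nlinarith
        have h3 : y - x₀ = 0 := by
          rw [← norm_eq_zero]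
          nlinarith [norm_nonneg (y - x₀)]
        have : y = x₀ := by
          rw [← sub_eq_zero]; exact h3
        simp [this]
      haveI : Nontrivial (EuclideanSpace ℝ (Fin n)) :=
        Module.nontrivial_of_finrank_pos (R := ℝ)
          (by rw [finrank_euclideanSpace_fin]; omega)
      have h2 := interior_mono hW0
      rw [interior_singleton] at h2
      exact h2 hx
  -- Part 1 : (n+1) h² = 1
  have hq : ((n:ℝ)+1) * h^2 = 1 := by
    rcases Nat.eq_zero_or_pos n with hn0 | hn1
    · subst hn0
      have hkey := stmt7_key_lemma 0 h hh u hu f hFu W' hLoew h hh 0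
        (inner_zero_right _) LinearMap.id (by simp) ?_
      · rw [LinearMap.det_id, abs_one, mul_one] at hkey
        have : h = 1 := le_antisymm hh1 hkey
        rw [this]; norm_num
      · intro x hx
        refine ⟨0, ?_, ?_⟩
        · rw [div_self (pow_ne_zero 2 hh.ne')]
          simp
        · have hxx : x = x₀ := Subsingleton.elim x x₀
          rw [hxx, hx₀]
          simp
    · have hn1' : (1:ℝ) ≤ n := by exact_mod_cast hn1
      have hlth := hlt1 hn1
      have h1h : 0 < 1 - h^2 := by nlinarith
      set α := Real.sqrt ((n:ℝ)+1) * h with hαdef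
      set β := Real.sqrt (((n:ℝ)+1)*(1-h^2)/n) with hβdef
      have hα : 0 < α := mul_pos (Real.sqrt_pos.2 (by positivity)) hh
      have hβ : 0 < β := Real.sqrt_pos.2 (by positivity)
      have hα2 : α^2 = ((n:ℝ)+1) * h^2 := by
        rw [hαdef, mul_pow, Real.sq_sqrt (by positivity)]
      have hβ2 : β^2 = ((n:ℝ)+1)*(1-h^2)/n := Real.sq_sqrt (by positivity)
      have hdet : LinearMap.det
          (β • (LinearMap.id : EuclideanSpace ℝ (Fin n) →ₗ[ℝ] EuclideanSpace ℝ (Fin n)))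
          = β ^ n := by
        rw [LinearMap.det_smul, LinearMap.det_id, finrank_euclideanSpace_fin, mul_one]
      have hkey := stmt7_key_lemma n h hh u hu f hFu W' hLoew α hα 0
        (inner_zero_right _) (β • LinearMap.id)
        (by rw [hdet]; positivity) ?_
      · rw [hdet, abs_of_pos (pow_pos hβ n)] at hkey
        by_contra hne
        have hamgm := stmt7_amgm_aux hn1 (x := h^2) (by positivity) (by nlinarith) hne
        have hsq : 1 ≤ α^2 * (β^2)^n := by
          have h3 : 1 ≤ (α * β^n)^2 := by nlinarith [pow_pos hβ n]
          calc (1:ℝ) ≤ (α * β^n)^2 := h3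
            _ = α^2 * (β^2)^n := by rw [mul_pow, ← pow_mul, ← pow_mul, Nat.mul_comm]
        rw [hα2, hβ2] at hsq
        linarith
      · intro x hx
        refine ⟨β⁻¹ • (x - x₀), ?_, ?_⟩
        · have hb1 := hWr x hx
          have hnn : (0:ℝ) < n := by exact_mod_cast hn1
          rw [norm_smul, Real.norm_eq_abs, abs_of_pos (inv_pos.2 hβ)]
          have e1 : 1 - h^2/α^2 = n/((n:ℝ)+1) := by
            rw [hα2]; field_simp; ring
          have e2 : (β⁻¹ * ‖x-x₀‖)^2 = (‖x-x₀‖^2) / β^2 := by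
            field_simp
          rw [e1, e2, hβ2]
          rw [div_le_div_iff₀ (div_pos (mul_pos (by positivity) h1h) hnn) (by positivity)]
          have e4 : (n:ℝ) * (((n:ℝ)+1)*(1-h^2)/n) = ((n:ℝ)+1)*(1-h^2) := by
            field_simp
          nlinarith [norm_nonneg (x - x₀), e4, hb1]
        · have e3 : (β • (LinearMap.id :
              EuclideanSpace ℝ (Fin n) →ₗ[ℝ] EuclideanSpace ℝ (Fin n)))
              (β⁻¹ • (x - x₀)) = x - x₀ := by
            simp [smul_smul, mul_inv_cancel₀ hβ.ne', inv_mul_cancel₀ hβ.ne']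
          rw [e3, ← hFd x]
          abel
  have hh2 : h^2 = 1/((n:ℝ)+1) := by
    have hpos : ((n:ℝ)+1) ≠ 0 := by positivity
    field_simp
    linarith
  have hval : h = 1 / Real.sqrt ((n:ℝ)+1) := by
    rw [← Real.sqrt_sq hh.le, hh2, one_div, Real.sqrt_inv, one_div]
  refine ⟨hval, ?_⟩
  -- Part 2
  set r := Real.sqrt (1 - h^2) with hrdef
  have hr2 : r^2 = 1 - h^2 := Real.sq_sqrt (by nlinarith)
  have hpre : f ⁻¹' B = Metric.closedBall x₀ r := by
    ext x
    rw [Set.mem_preimage, hBdef, Metric.mem_closedBall, Metric.mem_closedBall,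
      dist_zero_right, dist_eq_norm]
    constructor
    · intro hx
      have h1 := hpyth x
      have h2 : ‖x-x₀‖^2 ≤ r^2 := by rw [hr2]; nlinarith [norm_nonneg (f x)]
      nlinarith [norm_nonneg (x - x₀), Real.sqrt_nonneg (1-h^2)]
    · intro hx
      have h1 := hpyth x
      have h2 : ‖x-x₀‖^2 ≤ 1 - h^2 := by
        rw [← hr2]; nlinarith [norm_nonneg (x - x₀), Real.sqrt_nonneg (1-h^2)]
      nlinarith [norm_nonneg (f x)]
  have hWsub : W' ⊆ f ⁻¹' B := by
    intro x hx
    rw [Set.mem_preimage, hBdef, Metric.mem_closedBall, dist_zero_right]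
    exact hWB x hx
  rcases Nat.eq_zero_or_pos n with hn0 | hn1
  · -- n = 0 : everything is trivial in a subsingleton space
    subst hn0
    have hss : ∀ a b2 : EuclideanSpace ℝ (Fin 0), a = b2 :=
      fun a b2 => Subsingleton.elim a b2
    have h1 : h = 1 := by nlinarith
    have hmem : ∀ y : EuclideanSpace ℝ (Fin 0), y ∈ f ⁻¹' B := by
      intro y
      rw [hpre, Metric.mem_closedBall, hss y x₀, dist_self]
      exact Real.sqrt_nonneg _
    refine ⟨⟨LinearEquiv.refl ℝ _, x₀, ?_⟩, hWsub, ?_⟩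
    · ext y
      simp only [LinearEquiv.refl_apply, Set.mem_image]
      constructor
      · intro _
        exact ⟨0, by simp, hss _ _⟩
      · intro _
        exact hmem y
    · intro E' hE' hWE'
      obtain ⟨L'', c'', rfl⟩ := hE'
      have : f ⁻¹' B = (fun x => c'' + L'' x) '' Metric.closedBall 0 1 := by
        ext y
        simp only [Set.mem_image]
        constructor
        · intro _
          exact ⟨0, by simp, hss _ _⟩
        · intro _
          exact hmem y
      rw [this]
  · -- n ≥ 1
    have hlth := hlt1 hn1
    have h1h : 0 < 1 - h^2 := by nlinarith
    have hr0 : 0 < r := Real.sqrt_pos.2 h1h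
    refine ⟨⟨LinearEquiv.smulOfNeZero ℝ _ r hr0.ne', x₀, ?_⟩, hWsub, ?_⟩
    · rw [hpre]
      ext y
      simp only [Set.mem_image, LinearEquiv.smulOfNeZero_apply, Units.smul_mk0,
        Metric.mem_closedBall, dist_zero_right, dist_eq_norm, sub_zero]
      constructor
      · intro hy
        refine ⟨r⁻¹ • (y - x₀), ?_, ?_⟩
        · rw [norm_smul, Real.norm_eq_abs, abs_of_pos (inv_pos.2 hr0)]
          rw [inv_mul_le_iff₀ hr0, mul_one]
          exact hy
        · rw [smul_smul, mul_inv_cancel₀ hr0.ne', one_smul]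
          abel
      · rintro ⟨z, hz, rfl⟩
        rw [add_sub_cancel_left, norm_smul, Real.norm_eq_abs, abs_of_pos hr0]
        calc r * ‖z‖ ≤ r * 1 := by
              apply mul_le_mul_of_nonneg_left hz hr0.le
          _ = r := mul_one r
    · intro E' hE' hWE'
      obtain ⟨L'', c'', rfl⟩ := hE'
      have hdetL : LinearMap.det (L'' : EuclideanSpace ℝ (Fin n) →ₗ[ℝ]
          EuclideanSpace ℝ (Fin n)) ≠ 0 := L''.isUnit_det'.ne_zero
      have hdet2 : LinearMap.det (r⁻¹ • (L'' : EuclideanSpace ℝ (Fin n) →ₗ[ℝ]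
          EuclideanSpace ℝ (Fin n))) = (r⁻¹)^n * LinearMap.det (L'' :
          EuclideanSpace ℝ (Fin n) →ₗ[ℝ] EuclideanSpace ℝ (Fin n)) := by
        rw [LinearMap.det_smul, finrank_euclideanSpace_fin]
      have hkey := stmt7_key_lemma n h hh u hu f hFu W' hLoew 1 one_pos
        (F (c'' - x₀)) (hFu _) (r⁻¹ • (L'' : EuclideanSpace ℝ (Fin n) →ₗ[ℝ]
          EuclideanSpace ℝ (Fin n)))
        (by rw [hdet2]; exact mul_ne_zero (pow_ne_zero _ (inv_ne_zero hr0.ne')) hdetL)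
        ?_
      · rw [hdet2, one_mul, abs_mul, abs_pow, abs_of_pos (inv_pos.2 hr0), inv_pow] at hkey
        have hrn : r^n ≤ |LinearMap.det (L'' : EuclideanSpace ℝ (Fin n) →ₗ[ℝ]
            EuclideanSpace ℝ (Fin n))| := by
          have hp : 0 < r^n := pow_pos hr0 n
          have hpinv : r^n * (r^n)⁻¹ = 1 := mul_inv_cancel₀ hp.ne'
          nlinarith [mul_le_mul_of_nonneg_left hkey hp.le, hpinv,
            abs_nonneg (LinearMap.det (L'' : EuclideanSpace ℝ (Fin n) →ₗ[ℝ]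
              EuclideanSpace ℝ (Fin n)))]
        have himg : volume ((fun x : EuclideanSpace ℝ (Fin n) => c'' + L'' x) ''
            Metric.closedBall 0 1)
            = ENNReal.ofReal |LinearMap.det (L'' : EuclideanSpace ℝ (Fin n) →ₗ[ℝ]
                EuclideanSpace ℝ (Fin n))| *
              volume (Metric.closedBall (0 : EuclideanSpace ℝ (Fin n)) 1) := by
          rw [show (fun x : EuclideanSpace ℝ (Fin n) => c'' + L'' x)
              = (fun y => c'' +ᵥ y) ∘ (fun x => (L'' : EuclideanSpace ℝ (Fin n) →ₗ[ℝ]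
                EuclideanSpace ℝ (Fin n)) x) from rfl,
            Set.image_comp, Set.image_vadd, measure_vadd,
            Measure.addHaar_image_linearMap volume]
        rw [himg, hpre, Measure.addHaar_closedBall' volume x₀ hr0.le,
          finrank_euclideanSpace_fin]
        exact mul_le_mul_left (ENNReal.ofReal_le_ofReal hrn) _
      · intro x hx
        obtain ⟨ζ, hζ, hxe⟩ := hWE' hx
        rw [mem_closedBall_zero_iff] at hζ
        refine ⟨r • ζ, ?_, ?_⟩
        · rw [norm_smul, Real.norm_eq_abs, abs_of_pos hr0]
          have e0 : h^2/1^2 = h^2 := by norm_num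
          rw [e0]
          have hz2 : ‖ζ‖^2 ≤ 1 := by nlinarith [norm_nonneg ζ]
          nlinarith [hz2, hr2, sq_nonneg r]
        · have e1 : (r⁻¹ • (L'' : EuclideanSpace ℝ (Fin n) →ₗ[ℝ]
              EuclideanSpace ℝ (Fin n))) (r • ζ) = L'' ζ := by
            rw [LinearMap.smul_apply, LinearMap.map_smul, smul_smul,
              inv_mul_cancel₀ hr0.ne', one_smul]
            rfl
          rw [e1, add_assoc]
          have e2 : F (c'' - x₀) + F (L'' ζ) = F (c'' + L'' ζ - x₀) := by
            rw [← map_add]; congr 1; abel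
          have hxe' : c'' + L'' ζ = x := hxe
          rw [e2, hxe', ← hFd x]
          abel
end

section
/- The bilinear form ⟨A,B⟩ = (1 + 1/D)·tr(AB) − (1/D)·tr(A)·tr(B) on the real space of Hermitian D×D matrices is a positive-definite inner product, and every Hermitian A with trace norm ‖A‖₁ ≤ 1 satisfies ⟨A,A⟩ ≤ 1 (i.e., Δ(ℂ^D) is contained in the corresponding unit ball). -/
/-- The scalar product `⟨A,B⟩ = (1 + 1/D) tr(AB) − (1/D) tr(A) tr(B)`. -/
noncomputable def hermForm (D : ℕ) (A B : Matrix (Fin D) (Fin D) ℂ) : ℝ :=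
  (1 + 1 / (D : ℝ)) * (Matrix.trace (A * B)).re -
    (1 / (D : ℝ)) * ((Matrix.trace A).re * (Matrix.trace B).re)

/-- The trace norm of a Hermitian matrix. -/
noncomputable def traceNorm {D : ℕ} (A : Matrix (Fin D) (Fin D) ℂ)
    (hA : A.IsHermitian) : ℝ := ∑ i, |hA.eigenvalues i|

lemma trace_eq_sum_eig {D : ℕ} (A : Matrix (Fin D) (Fin D) ℂ) (hA : A.IsHermitian) :
    (Matrix.trace A).re = ∑ i, hA.eigenvalues i := by
  conv_lhs => rw [hA.spectral_theorem, Unitary.conjStarAlgAut_apply]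
  rw [Matrix.trace_mul_cycle,
    (Matrix.mem_unitaryGroup_iff').mp (hA.eigenvectorUnitary).2, one_mul,
    Matrix.trace_diagonal]
  simp

lemma trace_sq_eq_sum_eig_sq {D : ℕ} (A : Matrix (Fin D) (Fin D) ℂ) (hA : A.IsHermitian) :
    (Matrix.trace (A * A)).re = ∑ i, hA.eigenvalues i ^ 2 := by
  conv_lhs => rw [hA.spectral_theorem, Unitary.conjStarAlgAut_apply]
  rw [show ((hA.eigenvectorUnitary : Matrix (Fin D) (Fin D) ℂ) *
        Matrix.diagonal (RCLike.ofReal ∘ hA.eigenvalues) *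
        (star hA.eigenvectorUnitary : Matrix (Fin D) (Fin D) ℂ)) *
      ((hA.eigenvectorUnitary : Matrix (Fin D) (Fin D) ℂ) *
        Matrix.diagonal (RCLike.ofReal ∘ hA.eigenvalues) *
        (star hA.eigenvectorUnitary : Matrix (Fin D) (Fin D) ℂ)) =
      (hA.eigenvectorUnitary : Matrix (Fin D) (Fin D) ℂ) *
        (Matrix.diagonal (RCLike.ofReal ∘ hA.eigenvalues) *
          Matrix.diagonal (RCLike.ofReal ∘ hA.eigenvalues)) *
        (star hA.eigenvectorUnitary : Matrix (Fin D) (Fin D) ℂ) from by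
    rw [mul_assoc, mul_assoc, mul_assoc, mul_assoc]
    congr 1
    rw [← mul_assoc ((star hA.eigenvectorUnitary : Matrix (Fin D) (Fin D) ℂ)),
      (Matrix.mem_unitaryGroup_iff').mp (hA.eigenvectorUnitary).2, one_mul, mul_assoc]]
  rw [Matrix.trace_mul_cycle, ← mul_assoc,
    (Matrix.mem_unitaryGroup_iff').mp (hA.eigenvectorUnitary).2, one_mul,
    Matrix.diagonal_mul_diagonal, Matrix.trace_diagonal]
  simp [sq]

/-- The bilinear form `⟨A,B⟩ = (1+1/D) tr(AB) − (1/D) tr A tr B` is positive definite on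
Hermitian matrices, and every Hermitian matrix of trace norm at most one lies in its unit
ball. -/
theorem stmt_9 (D : ℕ) (hD : 0 < D) :
    (∀ A : Matrix (Fin D) (Fin D) ℂ, A.IsHermitian → A ≠ 0 → 0 < hermForm D A A) ∧
    (∀ (A : Matrix (Fin D) (Fin D) ℂ) (hA : A.IsHermitian),
      traceNorm A hA ≤ 1 → hermForm D A A ≤ 1) := by
  have hD1 : (1 : ℝ) ≤ (D : ℝ) := by exact_mod_cast hD
  have hD0 : (0 : ℝ) < (D : ℝ) := by exact_mod_cast hD
  constructor
  · intro A hA hne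
    have hq := trace_sq_eq_sum_eig_sq A hA
    have hs := trace_eq_sum_eig A hA
    unfold hermForm
    rw [hq, hs]
    set q := ∑ i, hA.eigenvalues i ^ 2 with hqdef
    set s := ∑ i, hA.eigenvalues i with hsdef
    have hCS : s ^ 2 ≤ (D : ℝ) * q := by
      have := sq_sum_le_card_mul_sum_sq (s := (Finset.univ : Finset (Fin D)))
        (f := hA.eigenvalues)
      simpa [hqdef, hsdef] using this
    have hqpos : 0 < q := by
      have hne' : hA.eigenvalues ≠ 0 := by
        intro h
        apply hne
        have := hA.spectral_theorem
        rwa [h, Pi.comp_zero, RCLike.ofReal_zero,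
          (by rfl : Function.const (Fin D) (0 : ℂ) = fun _ ↦ 0),
          Matrix.diagonal_zero, Unitary.conjStarAlgAut_apply, mul_zero, zero_mul] at this
      obtain ⟨i, hi⟩ := Function.ne_iff.mp hne'
      have h2 : 0 < hA.eigenvalues i ^ 2 :=
        lt_of_le_of_ne (sq_nonneg _) (Ne.symm (pow_ne_zero 2 hi))
      refine h2.trans_le ?_
      exact Finset.single_le_sum (f := fun i => hA.eigenvalues i ^ 2)
        (fun j _ => sq_nonneg _) (Finset.mem_univ i)
    have hkey : (1 / (D:ℝ)) * (s * s) ≤ q := by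
      rw [div_mul_eq_mul_div, one_mul, div_le_iff₀ hD0]
      nlinarith
    have h1D : 0 < 1/(D:ℝ) := by positivity
    nlinarith [hkey, mul_pos h1D hqpos]
  · intro A hA ht
    have hq := trace_sq_eq_sum_eig_sq A hA
    have hs := trace_eq_sum_eig A hA
    unfold hermForm
    rw [hq, hs]
    unfold traceNorm at ht
    set lam := hA.eigenvalues with hlam
    set q := ∑ i, lam i ^ 2 with hqdef
    set s := ∑ i, lam i with hsdef
    set t := ∑ i, |lam i| with htdef
    set p := ∑ i, max (lam i) 0 with hpdef
    set m := ∑ i, max (-lam i) 0 with hmdef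
    have hp0 : 0 ≤ p := Finset.sum_nonneg fun i _ => le_max_right _ _
    have hm0 : 0 ≤ m := Finset.sum_nonneg fun i _ => le_max_right _ _
    have htpm : t = p + m := by
      rw [htdef, hpdef, hmdef, ← Finset.sum_add_distrib]
      refine Finset.sum_congr rfl fun i _ => ?_
      rcases le_total (lam i) 0 with h | h
      · rw [abs_of_nonpos h, max_eq_right h, max_eq_left (by linarith : (0:ℝ) ≤ -lam i)]; ring
      · rw [abs_of_nonneg h, max_eq_left h, max_eq_right (by linarith : -lam i ≤ 0)]; ring
    have hspm : s = p - m := by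
      rw [hsdef, hpdef, hmdef, ← Finset.sum_sub_distrib]
      refine Finset.sum_congr rfl fun i _ => ?_
      rcases le_total (lam i) 0 with h | h
      · rw [max_eq_right h, max_eq_left (by linarith : (0:ℝ) ≤ -lam i)]; ring
      · rw [max_eq_left h, max_eq_right (by linarith : -lam i ≤ 0)]; ring
    have hqle : q ≤ p ^ 2 + m ^ 2 := by
      have h1 : ∑ i, max (lam i) 0 ^ 2 ≤ p ^ 2 := by
        rw [hpdef]; exact Finset.sum_sq_le_sq_sum_of_nonneg fun i _ => le_max_right _ _
      have h2 : ∑ i, max (-lam i) 0 ^ 2 ≤ m ^ 2 := by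
        rw [hmdef]; exact Finset.sum_sq_le_sq_sum_of_nonneg fun i _ => le_max_right _ _
      have h3 : q = ∑ i, max (lam i) 0 ^ 2 + ∑ i, max (-lam i) 0 ^ 2 := by
        rw [hqdef, ← Finset.sum_add_distrib]
        refine Finset.sum_congr rfl fun i _ => ?_
        rcases le_total (lam i) 0 with h | h
        · rw [max_eq_right h, max_eq_left (by linarith : (0:ℝ) ≤ -lam i)]; ring
        · rw [max_eq_left h, max_eq_right (by linarith : -lam i ≤ 0)]; ring
      linarith
    have ht0 : 0 ≤ t := by rw [htpm]; linarith
    have key : ((D:ℝ) + 1) * q ≤ (D:ℝ) * t ^ 2 + s ^ 2 := by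
      rw [htpm, hspm]
      nlinarith [mul_nonneg hp0 hm0, hqle]
    have ht2 : t ^ 2 ≤ 1 := by nlinarith
    have heq : (1 + 1 / (D:ℝ)) * q - 1 / (D:ℝ) * (s * s) =
        (((D:ℝ) + 1) * q - s ^ 2) / D := by field_simp
    rw [heq, div_le_iff₀ hD0]
    nlinarith [sq_nonneg s]
end

section
/- Every separable state on ℂ^{D₁} ⊗ ℂ^{D₂} has positive partial transpose: if ρ is a finite convex combination of product states ρ₁ ⊗ ρ₂ (with ρ₁, ρ₂ density matrices on ℂ^{D₁}, ℂ^{D₂}), then Tρ (partial transpose with respect to the first factor) is positive semidefinite. -/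
open Matrix Kronecker
open scoped ComplexOrder

/-- Partial transpose with respect to the first factor on `ℂ^{D₁} ⊗ ℂ^{D₂}`. -/
def ptrans {D₁ D₂ : ℕ} (ρ : Matrix (Fin D₁ × Fin D₂) (Fin D₁ × Fin D₂) ℂ) :
    Matrix (Fin D₁ × Fin D₂) (Fin D₁ × Fin D₂) ℂ :=
  fun p q => ρ (q.1, p.2) (p.1, q.2)

lemma kron_conjTranspose {m n : Type*} (A : Matrix m m ℂ) (B : Matrix n n ℂ) :
    (A ⊗ₖ B)ᴴ = Aᴴ ⊗ₖ Bᴴ := by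
  ext ⟨i, j⟩ ⟨k, l⟩
  simp [Matrix.conjTranspose_apply, Matrix.kroneckerMap_apply, mul_comm]

lemma kron_psd {m n : Type*} [Fintype m] [Fintype n] [DecidableEq m] [DecidableEq n]
    {A : Matrix m m ℂ} {B : Matrix n n ℂ}
    (hA : A.PosSemidef) (hB : B.PosSemidef) : (A ⊗ₖ B).PosSemidef := by
  exact hA.kronecker hB

lemma psd_smul {n : Type*} [Fintype n] {M : Matrix n n ℂ} (hM : M.PosSemidef)
    {c : ℝ} (hc : 0 ≤ c) : ((c : ℂ) • M).PosSemidef := by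
  constructor
  · have := hM.1
    unfold Matrix.IsHermitian at *
    rw [Matrix.conjTranspose_smul, this]
    congr 1
    simp
  · intro x
    have h := hM.2 x
    exact (hM.smul (a := (c : ℂ)) (by exact_mod_cast hc)).2 x

/-- Peres criterion: every separable state (a finite convex combination of tensor
products of density matrices) has positive semidefinite partial transpose. -/
theorem stmt_12 (D₁ D₂ : ℕ) (ι : Type*) [Fintype ι]
    (w : ι → ℝ) (hw0 : ∀ i, 0 ≤ w i) (hw1 : ∑ i, w i = 1)
    (ρ₁ : ι → Matrix (Fin D₁) (Fin D₁) ℂ) (ρ₂ : ι → Matrix (Fin D₂) (Fin D₂) ℂ)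
    (hρ₁ : ∀ i, (ρ₁ i).PosSemidef) (ht₁ : ∀ i, (ρ₁ i).trace = 1)
    (hρ₂ : ∀ i, (ρ₂ i).PosSemidef) (ht₂ : ∀ i, (ρ₂ i).trace = 1)
    (ρ : Matrix (Fin D₁ × Fin D₂) (Fin D₁ × Fin D₂) ℂ)
    (hρ : ρ = ∑ i, (w i : ℂ) • (ρ₁ i ⊗ₖ ρ₂ i)) :
    (ptrans ρ).PosSemidef := by
  have key : ptrans ρ = ∑ i, (w i : ℂ) • ((ρ₁ i)ᵀ ⊗ₖ ρ₂ i) := by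
    subst hρ
    ext ⟨a, b⟩ ⟨c, d⟩
    simp [ptrans, Matrix.sum_apply, Matrix.kroneckerMap_apply, Matrix.transpose_apply]
  rw [key]
  exact Finset.sum_induction (fun i => (w i : ℂ) • ((ρ₁ i)ᵀ ⊗ₖ ρ₂ i))
    (fun M => M.PosSemidef) (fun a b ha hb => ha.add hb) Matrix.PosSemidef.zero
    (fun i _ => psd_smul (kron_psd (hρ₁ i).transpose (hρ₂ i)) (hw0 i))
end

section
/- For convex bodies K ⊂ ℝ^n and K' ⊂ ℝ^{n'}, the symmetrization commutes with projective tensor product: conv((K ⊗̂ K') ∪ −(K ⊗̂ K')) = conv(K ∪ −K) ⊗̂ conv(K' ∪ −K'). In particular, with 𝒮 = 𝒟(ℋ₁) ⊗̂ 𝒟(ℋ₂) the set of separable states on ℋ₁ ⊗ ℋ₂, its symmetrization Σ = conv(𝒮 ∪ −𝒮) equals Δ(ℋ₁) ⊗̂ Δ(ℋ₂), where Δ is the Hermitian trace-norm unit ball. -/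
open Pointwise Kronecker
open scoped TensorProduct ComplexOrder

section Aux
variable {E F G : Type*} [AddCommGroup E] [Module ℝ E] [AddCommGroup F] [Module ℝ F]
  [AddCommGroup G] [Module ℝ G]

theorem aux_key (f : E →ₗ[ℝ] F →ₗ[ℝ] G) (A : Set E) (B : Set F) :
    convexHull ℝ {z | ∃ x ∈ convexHull ℝ (A ∪ -A), ∃ y ∈ convexHull ℝ (B ∪ -B), z = f x y}
      = convexHull ℝ
        ({z | ∃ x ∈ A, ∃ y ∈ B, z = f x y} ∪ -{z | ∃ x ∈ A, ∃ y ∈ B, z = f x y}) := by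
  set T : Set G := {z | ∃ x ∈ A, ∃ y ∈ B, z = f x y} with hT
  apply le_antisymm
  · apply convexHull_min _ (convex_convexHull ℝ _)
    rintro z ⟨x, hx, y, hy, rfl⟩
    -- first: for any y' ∈ B ∪ -B, f x y' ∈ convexHull (T ∪ -T)
    have step1 : ∀ y' ∈ B ∪ -B, f x y' ∈ convexHull ℝ (T ∪ -T) := by
      intro y' hy'
      have himg : f.flip y' '' convexHull ℝ (A ∪ -A) = convexHull ℝ (f.flip y' '' (A ∪ -A)) :=
        LinearMap.image_convexHull _ _
      have hmem : f x y' ∈ convexHull ℝ (f.flip y' '' (A ∪ -A)) := by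
        rw [← himg]; exact ⟨x, hx, rfl⟩
      refine convexHull_mono ?_ hmem
      rintro _ ⟨x', hx', rfl⟩
      rcases hx' with hx' | hx'
      · rcases hy' with hy' | hy'
        · exact Or.inl ⟨x', hx', y', hy', rfl⟩
        · refine Or.inr (Set.mem_neg.2 ⟨x', hx', -y', hy', by simp⟩)
      · rcases hy' with hy' | hy'
        · exact Or.inr (Set.mem_neg.2 ⟨-x', hx', y', hy', by simp⟩)
        · exact Or.inl ⟨-x', hx', -y', hy', by simp⟩
    have himg : f x '' convexHull ℝ (B ∪ -B) = convexHull ℝ (f x '' (B ∪ -B)) :=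
      LinearMap.image_convexHull _ _
    have hmem : f x y ∈ convexHull ℝ (f x '' (B ∪ -B)) := by
      rw [← himg]; exact ⟨y, hy, rfl⟩
    have : convexHull ℝ (f x '' (B ∪ -B)) ⊆ convexHull ℝ (T ∪ -T) := by
      apply convexHull_min _ (convex_convexHull ℝ _)
      · rintro _ ⟨y', hy', rfl⟩
        exact step1 y' hy'
    exact this hmem
  · apply convexHull_mono
    rintro z (⟨x, hx, y, hy, rfl⟩ | hz)
    · exact ⟨x, subset_convexHull ℝ _ (Or.inl hx), y, subset_convexHull ℝ _ (Or.inl hy), rfl⟩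
    · rw [Set.mem_neg] at hz
      obtain ⟨x, hx, y, hy, hzy⟩ := hz
      refine ⟨-x, subset_convexHull ℝ _ (Or.inr (Set.neg_mem_neg.2 hx)), y,
        subset_convexHull ℝ _ (Or.inl hy), ?_⟩
      simp [← hzy]

theorem aux_sym (T : Set G) :
    convexHull ℝ (convexHull ℝ T ∪ -convexHull ℝ T) = convexHull ℝ (T ∪ -T) := by
  rw [← convexHull_neg, convexHull_convexHull_union_left, convexHull_convexHull_union_right]

end Aux


noncomputable def kronBilin (D₁ D₂ : ℕ) :
    Matrix (Fin D₁) (Fin D₁) ℂ →ₗ[ℝ] Matrix (Fin D₂) (Fin D₂) ℂ →ₗ[ℝ]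
      Matrix (Fin D₁ × Fin D₂) (Fin D₁ × Fin D₂) ℂ :=
  LinearMap.mk₂ ℝ (fun A B => A ⊗ₖ B)
    (fun A A' B => Matrix.add_kronecker A A' B)
    (fun r A B => Matrix.smul_kronecker r A B)
    (fun A B B' => Matrix.kronecker_add A B B')
    (fun r A B => Matrix.kronecker_smul r A B)

/-- The projective tensor product of convex bodies. -/
noncomputable def projTensor {n n' : ℕ}
    (K : Set (EuclideanSpace ℝ (Fin n))) (K' : Set (EuclideanSpace ℝ (Fin n'))) :
    Set (EuclideanSpace ℝ (Fin n) ⊗[ℝ] EuclideanSpace ℝ (Fin n')) :=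
  convexHull ℝ {z | ∃ x ∈ K, ∃ x' ∈ K', z = x ⊗ₜ[ℝ] x'}

/-- The set of density matrices on `ℂ^D`. -/
def densitySet (D : ℕ) : Set (Matrix (Fin D) (Fin D) ℂ) :=
  {ρ | ρ.PosSemidef ∧ ρ.trace = 1}

/-- Symmetrization commutes with the projective tensor product of convex bodies; in
particular the symmetrization `Σ = conv(𝒮 ∪ −𝒮)` of the set of separable states on
`ℂ^{D₁} ⊗ ℂ^{D₂}` equals `Δ(ℂ^{D₁}) ⊗̂ Δ(ℂ^{D₂})`, the projective tensor product of the
Hermitian trace-norm unit balls `Δ = conv(𝒟 ∪ −𝒟)`. -/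
theorem stmt_19 (n n' : ℕ)
    (K : Set (EuclideanSpace ℝ (Fin n))) (K' : Set (EuclideanSpace ℝ (Fin n')))
    (hKc : Convex ℝ K) (hKcp : IsCompact K) (hKne : (interior K).Nonempty)
    (hKc' : Convex ℝ K') (hKcp' : IsCompact K') (hKne' : (interior K').Nonempty)
    (D₁ D₂ : ℕ) :
    (convexHull ℝ (projTensor K K' ∪ -projTensor K K') =
      projTensor (convexHull ℝ (K ∪ -K)) (convexHull ℝ (K' ∪ -K'))) ∧
    (convexHull ℝ
        ((convexHull ℝ {ρ : Matrix (Fin D₁ × Fin D₂) (Fin D₁ × Fin D₂) ℂ |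
            ∃ ρ₁ ∈ densitySet D₁, ∃ ρ₂ ∈ densitySet D₂, ρ = ρ₁ ⊗ₖ ρ₂}) ∪
          -(convexHull ℝ {ρ : Matrix (Fin D₁ × Fin D₂) (Fin D₁ × Fin D₂) ℂ |
            ∃ ρ₁ ∈ densitySet D₁, ∃ ρ₂ ∈ densitySet D₂, ρ = ρ₁ ⊗ₖ ρ₂})) =
      convexHull ℝ {A : Matrix (Fin D₁ × Fin D₂) (Fin D₁ × Fin D₂) ℂ |
        ∃ B ∈ convexHull ℝ (densitySet D₁ ∪ -densitySet D₁),
          ∃ C ∈ convexHull ℝ (densitySet D₂ ∪ -densitySet D₂), A = B ⊗ₖ C}) := by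
  constructor
  · show convexHull ℝ (convexHull ℝ _ ∪ -convexHull ℝ _) = convexHull ℝ _
    exact (aux_sym _).trans (aux_key (TensorProduct.mk ℝ _ _) K K').symm
  · exact (aux_sym _).trans (aux_key (kronBilin D₁ D₂) (densitySet D₁) (densitySet D₂)).symm
end
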